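/- Let p > 5 be prime and suppose x, y ∈ ℤ ∖ {0} are coprime with x/y > 0 and not both |x| = |y| = 1, or with x/y < 0. Then x^p + y^p ≠ x + y unless x = -y or {|x|,|y|} = {1}. In particular, for coprime x, y ∈ ℤ∖{0} with x + y ≢ 0 mod p and |x|,|y| not both 1, the algebraic integer x + ζ^g y (1 ≤ g ≤ p-1) is not a unit of ℤ[ζ]. -/

import Mathlib

open NumberField

private lemma auxpow (a b : ℤ) (hb : 1 ≤ b) (hab : b < a) :
    ∀ n : ℕ, 3 ≤ n → b ^ n + a + b < a ^ n := by
  intro n hn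
  induction n, hn using Nat.le_induction with
  | base =>
    have hab1 : (1:ℤ) ≤ a - b := by linarith
    have hq : (0:ℤ) ≤ a^2 + a*b + b^2 := by nlinarith
    have h1 := mul_le_mul_of_nonneg_right hab1 hq
    nlinarith
  | succ n hn ih =>
    have hbn : (0:ℤ) < b ^ n := pow_pos (by linarith) n
    have h1 : b * b ^ n ≤ a * b ^ n := mul_le_mul_of_nonneg_right hab.le hbn.le
    have h2 : a * (b ^ n + a + b + 1) ≤ a * a ^ n :=
      mul_le_mul_of_nonneg_left (by linarith) (by linarith)
    rw [pow_succ, pow_succ]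
    nlinarith

private lemma helper1 (n : ℕ) (hn : 3 ≤ n) (hodd : Odd n) (x y : ℤ) (hx : x ≠ 0) (hy : y ≠ 0)
    (h : x ^ n + y ^ n = x + y) (hne : x ≠ -y) (hle : |y| ≤ |x|) : |x| = 1 := by
  rcases hle.lt_or_eq with hlt | heq
  · exfalso
    have h1 : |x| ^ n - |y| ^ n ≤ |x ^ n + y ^ n| := by
      have := abs_sub_abs_le_abs_sub (x ^ n) (-(y ^ n))
      simp only [abs_neg, sub_neg_eq_add] at this
      rwa [abs_pow, abs_pow] at this
    have h2 : |x + y| ≤ |x| + |y| := abs_add_le x y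
    have h3 : |y| ^ n + |x| + |y| < |x| ^ n :=
      auxpow |x| |y| (Int.one_le_abs (by simpa using hy)) hlt n hn
    rw [h] at h1
    linarith
  · have hxy2 : x = y := by
      rcases abs_eq_abs.mp heq.symm with h' | h'
      · exact h'
      · exact absurd (by linarith : x = -y) hne
    subst hxy2
    have hxx : x ^ n = x := by linarith
    by_contra hne1
    have h1a : 1 ≤ |x| := Int.one_le_abs (by simpa using hx)
    have h2 : 1 < |x| := lt_of_le_of_ne h1a (Ne.symm hne1)
    have h3 : |x| ^ 3 ≤ |x| ^ n := pow_le_pow_right₀ (by linarith) hn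
    have h4 : |x| ^ n = |x| := by rw [← abs_pow, hxx]
    nlinarith [sq_nonneg |x|]

private lemma part1 (n : ℕ) (hn : 3 ≤ n) (hodd : Odd n) (x y : ℤ) (hx : x ≠ 0) (hy : y ≠ 0)
    (h : x ^ n + y ^ n = x + y) : x = -y ∨ (|x| = 1 ∧ |y| = 1) := by
  by_cases hne : x = -y
  · exact Or.inl hne
  · right
    have hne' : y ≠ -x := fun hh => hne (by linarith)
    have h' : y ^ n + x ^ n = y + x := by linarith
    rcases le_total |y| |x| with hle | hle
    · have h1 := helper1 n hn hodd x y hx hy h hne hle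
      have h2 : 1 ≤ |y| := Int.one_le_abs (by simpa using hy)
      exact ⟨h1, by omega⟩
    · have h1 := helper1 n hn hodd y x hy hx h' hne' hle
      have h2 : 1 ≤ |x| := Int.one_le_abs (by simpa using hx)
      exact ⟨by omega, h1⟩

open Polynomial in
private lemma normlem (p : ℕ+) (hp : (p : ℕ).Prime) (hp2 : 2 < (p : ℕ))
    {K : Type*} [Field K] [NumberField K] [IsCyclotomicExtension {(p : ℕ)} ℚ K]
    {η : K} (hη : IsPrimitiveRoot η (p : ℕ)) (x y : ℤ) (hy : y ≠ 0) :
    (Algebra.norm ℚ ((x : K) + η * y)) * ((x : ℚ) + y) = x ^ (p : ℕ) + y ^ (p : ℕ) := by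
  haveI : Fact (p : ℕ).Prime := ⟨hp⟩
  have hirr : Irreducible (cyclotomic p ℚ) := cyclotomic.irreducible_rat p.pos
  set E := AlgebraicClosure ℚ with hE
  haveI : CharZero E := charZero_of_injective_algebraMap (algebraMap ℚ E).injective
  haveI : NeZero ((p : ℕ) : E) := ⟨Nat.cast_ne_zero.mpr hp.ne_zero⟩
  obtain ⟨z0, hz0⟩ := IsAlgClosed.exists_root (cyclotomic p E)
    (degree_cyclotomic_pos p E p.pos).ne'
  have hz0' : IsPrimitiveRoot z0 (p : ℕ) := isRoot_cyclotomic_iff.1 hz0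
  have hyE : (y : E) ≠ 0 := Int.cast_ne_zero.mpr hy
  set t : E := -(x : E) / (y : E) with ht
  have hyt : -(y : E) * t = (x : E) := by rw [ht, mul_div_assoc', div_eq_iff hyE]; ring
  have hcard : (primitiveRoots (p : ℕ) E).card = (p : ℕ) - 1 := by
    rw [hz0'.card_primitiveRoots, Nat.totient_prime hp]
  have hQ : cyclotomic (p : ℕ) E = ∏ z ∈ primitiveRoots (p : ℕ) E, (X - C z) :=
    cyclotomic_eq_prod_X_sub_primitiveRoots hz0'
  have heval : (cyclotomic (p : ℕ) E).eval t = ∏ z ∈ primitiveRoots (p : ℕ) E, (t - z) := by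
    rw [hQ, eval_prod]; simp
  have hQt : (cyclotomic (p : ℕ) E).eval t * (t - 1) = t ^ (p : ℕ) - 1 := by
    have h := congrArg (eval t) (cyclotomic_prime_mul_X_sub_one E (p : ℕ))
    simpa using h
  apply (algebraMap ℚ E).injective
  rw [map_mul, Algebra.norm_eq_prod_embeddings ℚ E]
  have hprodσ : (∏ σ : K →ₐ[ℚ] E, σ ((x : K) + η * y)) =
      ∏ z ∈ primitiveRoots (p : ℕ) E, ((x : E) + z * y) := by
    rw [← Finset.prod_coe_sort (primitiveRoots (p : ℕ) E)]
    refine Fintype.prod_equiv (hη.embeddingsEquivPrimitiveRoots E hirr) _ _ fun σ => ?_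
    simp [IsPrimitiveRoot.embeddingsEquivPrimitiveRoots_apply_coe]
  have hfac : ∀ z ∈ primitiveRoots (p : ℕ) E, (x : E) + z * y = -(y : E) * (t - z) := by
    intro z _
    rw [mul_sub, hyt]; ring
  have hprod2 : (∏ z ∈ primitiveRoots (p : ℕ) E, ((x : E) + z * y)) =
      (-(y : E)) ^ ((p : ℕ) - 1) * (cyclotomic (p : ℕ) E).eval t := by
    rw [Finset.prod_congr rfl hfac, Finset.prod_mul_distrib, Finset.prod_const, hcard, heval]
  have hxy1 : (x : E) + y = -(y : E) * (t - 1) := by rw [mul_sub, hyt]; ring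
  have hq1 : (p : ℕ) - 1 + 1 = (p : ℕ) := Nat.succ_pred_eq_of_pos p.pos
  have hodd : Odd (p : ℕ) := hp.odd_of_ne_two (by omega)
  have hmapxy : algebraMap ℚ E ((x : ℚ) + y) = (x : E) + y := by
    rw [map_add, map_intCast, map_intCast]
  have hmapR : algebraMap ℚ E ((x : ℚ) ^ (p : ℕ) + y ^ (p : ℕ)) =
      (x : E) ^ (p : ℕ) + (y : E) ^ (p : ℕ) := by
    rw [map_add, map_pow, map_pow, map_intCast, map_intCast]
  rw [hprodσ, hprod2, hmapxy, hmapR]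
  calc (-(y : E)) ^ ((p : ℕ) - 1) * (cyclotomic (p : ℕ) E).eval t * ((x : E) + y)
      = (-(y : E)) ^ ((p : ℕ) - 1) * -(y : E) * ((cyclotomic (p : ℕ) E).eval t * (t - 1)) := by
        rw [hxy1]; ring
    _ = (-(y : E)) ^ (p : ℕ) * (t ^ (p : ℕ) - 1) := by rw [← pow_succ, hq1, hQt]
    _ = (-(y : E) * t) ^ (p : ℕ) - (-(y : E)) ^ (p : ℕ) := by rw [mul_pow]; ring
    _ = (x : E) ^ (p : ℕ) + (y : E) ^ (p : ℕ) := by rw [hyt, hodd.neg_pow]; ring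

theorem stmt5 (p : ℕ+) (hp : (p : ℕ).Prime) (hp5 : 5 < (p : ℕ))
    {K : Type*} [Field K] [NumberField K] [IsCyclotomicExtension {(p : ℕ)} ℚ K]
    (ζ : 𝓞 K) (hζ : IsPrimitiveRoot ζ (p : ℕ))
    (x y : ℤ) (hx : x ≠ 0) (hy : y ≠ 0) (hxy : IsCoprime x y) :
    (x ^ (p : ℕ) + y ^ (p : ℕ) = x + y → x = -y ∨ (|x| = 1 ∧ |y| = 1)) ∧
    (¬ ((p : ℤ) ∣ x + y) → ¬ (|x| = 1 ∧ |y| = 1) →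
      ∀ g : ℕ, 1 ≤ g → g ≤ (p : ℕ) - 1 →
        ¬ IsUnit ((x : 𝓞 K) + ζ ^ g * (y : 𝓞 K))) := by
  haveI : Fact (p : ℕ).Prime := ⟨hp⟩
  have hodd : Odd (p : ℕ) := hp.odd_of_ne_two (by omega)
  constructor
  · exact part1 (p : ℕ) (by omega) hodd x y hx hy
  · intro hpdvd hnot1 g hg1 hg2 hu
    have hζK : IsPrimitiveRoot ((algebraMap (𝓞 K) K) ζ) (p : ℕ) :=
      hζ.map_of_injective NumberField.RingOfIntegers.coe_injective
    have hnd : ¬ (p : ℕ) ∣ g := fun hd => by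
      have := Nat.le_of_dvd (by omega) hd; omega
    have hη : IsPrimitiveRoot (((algebraMap (𝓞 K) K) ζ) ^ g) (p : ℕ) :=
      hζK.pow_of_coprime g (Nat.coprime_comm.mp (hp.coprime_iff_not_dvd.mpr hnd))
    have hnorm := normlem p hp (by omega) hη x y hy
    have hcoe : ((((x : 𝓞 K) + ζ ^ g * (y : 𝓞 K)) : 𝓞 K) : K) =
        (x : K) + ((algebraMap (𝓞 K) K) ζ) ^ g * (y : K) := by
      push_cast
      rfl
    have hN := NumberField.isUnit_iff_norm.mp hu
    rw [RingOfIntegers.coe_norm, hcoe] at hN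
    rcases (abs_eq (by norm_num : (0:ℚ) ≤ 1)).mp hN with h1 | h1 <;> rw [h1] at hnorm
    · -- x^p + y^p = x + y
      have hZ : x ^ (p : ℕ) + y ^ (p : ℕ) = x + y := by
        have hq : ((x : ℚ)) ^ (p : ℕ) + (y : ℚ) ^ (p : ℕ) = (x : ℚ) + y := by linarith [hnorm]
        exact_mod_cast hq
      rcases part1 (p : ℕ) (by omega) hodd x y hx hy hZ with h2 | h2
      · exact hpdvd (by rw [h2]; simp)
      · exact hnot1 h2
    · -- x^p + y^p = -(x + y)
      have hZ : x ^ (p : ℕ) + y ^ (p : ℕ) = -(x + y) := by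
        have hq : ((x : ℚ)) ^ (p : ℕ) + (y : ℚ) ^ (p : ℕ) = -((x : ℚ) + y) := by linarith [hnorm]
        exact_mod_cast hq
      have hz : ((x : ZMod p) + y) = -((x : ZMod p) + y) := by
        have := congrArg (fun z : ℤ => (z : ZMod p)) hZ
        push_cast at this
        rwa [ZMod.pow_card, ZMod.pow_card] at this
      have h2 : (2 : ZMod p) * ((x : ZMod p) + y) = 0 := by
        rw [two_mul]; nth_rewrite 1 [hz]; ring
      have h2ne : (2 : ZMod p) ≠ 0 := by
        intro h
        rw [show (2 : ZMod p) = ((2 : ℕ) : ZMod p) by norm_cast,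
          ZMod.natCast_eq_zero_iff] at h
        have := Nat.le_of_dvd (by norm_num) h; omega
      have h3 : ((x : ZMod p) + y) = 0 := by
        rcases mul_eq_zero.mp h2 with h | h
        · exact absurd h h2ne
        · exact h
      apply hpdvd
      rwa [← ZMod.intCast_zmod_eq_zero_iff_dvd, Int.cast_add]
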